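/- (Method 1 controls the FDR at level π₀α, known-variance case.) Let (Ω, 𝔄, ℙ) be a probability space, m ≥ 1, α ∈ (0,1), and let N ⊆ {1,…,m} be the set of true null indices with m₀ = card(N). Suppose P₁,…,P_m : Ω → [0,1] and S₁,…,S_m : Ω → [0,∞) are random variables such that: (i) P₁,…,P_m are mutually independent; (ii) the random vector (S₁,…,S_m) is independent of the random vector (P₁,…,P_m); (iii) for every j ∈ N, ℙ(P_j ≤ t) ≤ t for all t ∈ [0,1]; and (iv) E[S_j] ≤ 1 for every j ∈ N. Define, pointwise on Ω, R = max{ r ∈ {0,1,…,m} : card{ j : P_j ≤ S_j · rα/m } ≥ r } and V = card{ j ∈ N : P_j ≤ S_j · Rα/m }. Then E[ V / max(R,1) ] ≤ (m₀/m) · α. -/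

import Mathlib

open MeasureTheory ProbabilityTheory Finset

namespace EpBH

variable (m : ℕ) (α : ℝ)

/-- number of indices rejected at threshold level `r`. -/
noncomputable def bhCount (s p : Fin m → ℝ) (r : ℕ) : ℕ :=
  (univ.filter (fun j : Fin m => p j ≤ s j * ((r : ℝ) * α / m))).card

/-- the BH rejection count. -/
noncomputable def bhRho (s p : Fin m → ℝ) : ℕ :=
  sSup {r : ℕ | r ≤ m ∧ r ≤ bhCount m α s p r}

variable {m α}

lemma bhRho_mem (s p : Fin m → ℝ) :
    bhRho m α s p ≤ m ∧ bhRho m α s p ≤ bhCount m α s p (bhRho m α s p) := by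
  have hne : ({r : ℕ | r ≤ m ∧ r ≤ bhCount m α s p r}).Nonempty :=
    ⟨0, Nat.zero_le _, Nat.zero_le _⟩
  have hbdd : BddAbove {r : ℕ | r ≤ m ∧ r ≤ bhCount m α s p r} :=
    ⟨m, fun _ hr => hr.1⟩
  exact Nat.sSup_mem hne hbdd

lemma le_bhRho {s p : Fin m → ℝ} {r : ℕ} (h1 : r ≤ m) (h2 : r ≤ bhCount m α s p r) :
    r ≤ bhRho m α s p := by
  have hbdd : BddAbove {r : ℕ | r ≤ m ∧ r ≤ bhCount m α s p r} :=
    ⟨m, fun _ hr => hr.1⟩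
  exact le_csSup hbdd ⟨h1, h2⟩

lemma bhCount_mono {s p p' : Fin m → ℝ} (h : ∀ k, p' k ≤ p k) (r : ℕ) :
    bhCount m α s p r ≤ bhCount m α s p' r := by
  apply Finset.card_le_card
  intro k hk
  simp only [Finset.mem_filter, Finset.mem_univ, true_and] at hk ⊢
  exact le_trans (h k) hk

lemma bhRho_mono {s p p' : Fin m → ℝ} (h : ∀ k, p' k ≤ p k) :
    bhRho m α s p ≤ bhRho m α s p' :=
  le_bhRho (bhRho_mem s p).1 (le_trans (bhRho_mem s p).2 (bhCount_mono h _))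

/-- the key deterministic comparison lemma between the rejection count and the
leave-one-out rejection count. -/
lemma bhRho_key {s p : Fin m → ℝ} {j : Fin m} (hm : 1 ≤ m) (hα : 0 ≤ α)
    (hsj : 0 ≤ s j) (hp : ∀ k, 0 ≤ p k) :
    1 ≤ bhRho m α s (Function.update p j 0) ∧
    ((p j ≤ s j * ((bhRho m α s p : ℝ) * α / m)) ↔
      (p j ≤ s j * ((bhRho m α s (Function.update p j 0) : ℝ) * α / m))) ∧
    ((p j ≤ s j * ((bhRho m α s (Function.update p j 0) : ℝ) * α / m)) →
      bhRho m α s p = bhRho m α s (Function.update p j 0)) := by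
  classical
  set p' := Function.update p j 0 with hp'
  have hple : ∀ k, p' k ≤ p k := by
    intro k
    rw [hp', Function.update_apply]
    split
    · next h => exact hp k
    · exact le_refl _
  have hmono : bhRho m α s p ≤ bhRho m α s p' := bhRho_mono hple
  have hmpos : (0:ℝ) < m := by exact_mod_cast hm
  have hnonneg : ∀ r : ℕ, 0 ≤ s j * ((r : ℝ) * α / m) := by
    intro r
    positivity
  have h1 : 1 ≤ bhRho m α s p' := by
    refine le_bhRho hm ?_
    rw [bhCount]
    refine Finset.card_pos.mpr ⟨j, ?_⟩
    simp only [Finset.mem_filter, Finset.mem_univ, true_and]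
    rw [hp', Function.update_self]
    exact hnonneg 1
  have hiff2 : (p j ≤ s j * ((bhRho m α s p' : ℝ) * α / m)) →
      bhRho m α s p = bhRho m α s p' := by
    intro hcond
    refine le_antisymm hmono (le_bhRho (bhRho_mem s p').1 ?_)
    have hcnt : bhCount m α s p' (bhRho m α s p') = bhCount m α s p (bhRho m α s p') := by
      unfold bhCount
      congr 1
      apply Finset.filter_congr
      intro k _
      by_cases hk : k = j
      · subst hk
        rw [hp', Function.update_self]
        simp only [hnonneg, ← hp', hcond, iff_true]
      · rw [hp', Function.update_of_ne hk]
    exact le_trans (bhRho_mem s p').2 (le_of_eq hcnt)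
  refine ⟨h1, ⟨fun h => ?_, fun h => ?_⟩, hiff2⟩
  · refine le_trans h (mul_le_mul_of_nonneg_left ?_ hsj)
    have : (bhRho m α s p : ℝ) ≤ (bhRho m α s p' : ℝ) := by exact_mod_cast hmono
    have hαm : 0 ≤ α / (m:ℝ) := by positivity
    calc (bhRho m α s p : ℝ) * α / m = (bhRho m α s p : ℝ) * (α / m) := by ring
      _ ≤ (bhRho m α s p' : ℝ) * (α / m) := mul_le_mul_of_nonneg_right this hαm
      _ = (bhRho m α s p' : ℝ) * α / m := by ring
  · rw [hiff2 h]; exact h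

lemma bhRho_eq_sup (s p : Fin m → ℝ) :
    bhRho m α s p
      = (Finset.range (m+1)).sup (fun r => if r ≤ bhCount m α s p r then r else 0) := by
  apply le_antisymm
  · have h := bhRho_mem (m := m) (α := α) s p
    refine Finset.le_sup_of_le (b := bhRho m α s p)
      (Finset.mem_range.mpr (Nat.lt_succ_of_le h.1)) ?_
    rw [if_pos h.2]
  · refine Finset.sup_le fun r hr => ?_
    split
    · next h => exact le_bhRho (Nat.lt_succ_iff.mp (Finset.mem_range.mp hr)) h
    · exact Nat.zero_le _

variable {δ : Type*} [MeasurableSpace δ]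

lemma measurable_finsetSup (t : Finset ℕ) (g : ℕ → δ → ℕ)
    (hg : ∀ r, Measurable (g r)) : Measurable fun w => t.sup fun r => g r w := by
  classical
  induction t using Finset.induction_on with
  | empty => simpa using measurable_const
  | insert _ _ _ ih => simpa [Finset.sup_insert] using Measurable.max (hg _) ih

lemma measurable_bhCount (r : ℕ) :
    Measurable (fun w : (Fin m → ℝ) × (Fin m → ℝ) => bhCount m α w.1 w.2 r) := by
  unfold bhCount
  simp_rw [Finset.card_filter]
  refine Finset.measurable_sum _ fun j _ => ?_
  refine Measurable.ite ?_ measurable_const measurable_const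
  have h2 : Measurable (fun w : (Fin m → ℝ) × (Fin m → ℝ) => w.2 j) :=
    measurable_snd.eval
  have h1 : Measurable (fun w : (Fin m → ℝ) × (Fin m → ℝ) => w.1 j) :=
    measurable_fst.eval
  exact measurableSet_le h2 (h1.mul_const _)

lemma measurable_bhRho :
    Measurable (fun w : (Fin m → ℝ) × (Fin m → ℝ) => bhRho m α w.1 w.2) := by
  simp_rw [bhRho_eq_sup]
  refine measurable_finsetSup _ _ fun r => ?_
  refine Measurable.ite ?_ measurable_const measurable_const
  show MeasurableSet ((fun w : (Fin m → ℝ) × (Fin m → ℝ) => bhCount m α w.1 w.2 r) ⁻¹' Set.Ici r)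
  exact (measurable_bhCount r) measurableSet_Ici

lemma measurable_bhCount2 {f g : δ → Fin m → ℝ}
    (hf : Measurable f) (hg : Measurable g) (r : ℕ) :
    Measurable (fun x => bhCount m α (f x) (g x) r) := by
  unfold bhCount
  simp_rw [Finset.card_filter]
  refine Finset.measurable_sum _ fun j _ => ?_
  refine Measurable.ite ?_ measurable_const measurable_const
  exact measurableSet_le (hg.eval) (hf.eval.mul_const _)

lemma measurable_bhRho2 {f g : δ → Fin m → ℝ}
    (hf : Measurable f) (hg : Measurable g) :
    Measurable (fun x => bhRho m α (f x) (g x)) := by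
  simp_rw [bhRho_eq_sup]
  refine measurable_finsetSup _ _ fun r => ?_
  refine Measurable.ite ?_ measurable_const measurable_const
  show MeasurableSet ((fun x => bhCount m α (f x) (g x) r) ⁻¹' Set.Ici r)
  exact (measurable_bhCount2 hf hg r) measurableSet_Ici

lemma measurable_mask (j : Fin m) :
    Measurable (fun p : Fin m → ℝ => Function.update p j 0) := by
  refine measurable_pi_lambda _ fun k => ?_
  by_cases hk : k = j
  · subst hk
    simp only [Function.update_self]
    exact measurable_const
  · simp only [Function.update_of_ne hk]
    exact measurable_pi_apply k

lemma indep_aux {Ω : Type*} [MeasurableSpace Ω] {μ : Measure Ω} [IsProbabilityMeasure μ]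
    (P S : Fin m → Ω → ℝ)
    (hPmeas : ∀ j, Measurable (P j)) (hSmeas : ∀ j, Measurable (S j))
    (hPindep : iIndepFun P μ)
    (hSPindep : IndepFun (fun ω j => S j ω) (fun ω j => P j ω) μ) (j : Fin m) :
    IndepFun (P j)
      (fun ω => ((fun k => S k ω, Function.update (fun k => P k ω) j 0) :
        (Fin m → ℝ) × (Fin m → ℝ))) μ := by
  classical
  set Sv : Ω → Fin m → ℝ := fun ω k => S k ω with hSvdef
  set Pv : Ω → Fin m → ℝ := fun ω k => P k ω with hPvdef
  set mask : (Fin m → ℝ) → Fin m → ℝ := fun p => Function.update p j 0 with hmaskdef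
  set Pm : Ω → Fin m → ℝ := fun ω => mask (Pv ω) with hPmdef
  set W : Ω → (Fin m → ℝ) × (Fin m → ℝ) := fun ω => (Sv ω, Pm ω) with hWdef
  have hSvmeas : Measurable Sv := measurable_pi_lambda _ fun k => hSmeas k
  have hPvmeas : Measurable Pv := measurable_pi_lambda _ fun k => hPmeas k
  have hPmmeas : Measurable Pm := (measurable_mask j).comp hPvmeas
  have hWmeas : Measurable W := hSvmeas.prodMk hPmmeas
  -- step 1 : P j is independent of Pm
  have hPm_indep : IndepFun (P j) Pm μ := by
    have hfin := hPindep.indepFun_finset {j} {j}ᶜ disjoint_compl_right hPmeas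
    have hL : Measurable (fun t : ({j} : Finset (Fin m)) → ℝ =>
        t ⟨j, Finset.mem_singleton_self j⟩) := measurable_pi_apply _
    set Φ : (({j}ᶜ : Finset (Fin m)) → ℝ) → (Fin m → ℝ) := fun t k =>
      if hk : k = j then 0
      else t ⟨k, by simp [Finset.mem_compl, hk]⟩ with hΦdef
    have hΦmeas : Measurable Φ := by
      refine measurable_pi_lambda _ fun k => ?_
      by_cases hk : k = j
      · simp only [hΦdef, hk, dif_pos]
        exact measurable_const
      · simp only [hΦdef, hk, dif_neg, not_false_iff]
        exact measurable_pi_apply _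
    have := hfin.comp hL hΦmeas
    have hLeq : ((fun t : ({j} : Finset (Fin m)) → ℝ =>
        t ⟨j, Finset.mem_singleton_self j⟩) ∘ (fun ω (i : ({j} : Finset (Fin m))) => P i ω))
        = P j := rfl
    have hReq : (Φ ∘ (fun ω (i : (({j}ᶜ : Finset (Fin m)) : Finset (Fin m))) => P i ω)) = Pm := by
      funext ω
      funext k
      by_cases hk : k = j
      · simp [hΦdef, hk, hPmdef, hmaskdef, hPvdef, Function.comp]
      · simp [hΦdef, hk, hPmdef, hmaskdef, hPvdef, Function.comp, Function.update_of_ne hk]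
    rw [hLeq, hReq] at this
    exact this
  -- step 2 : π-system argument
  show IndepFun (P j) W μ
  have hgoal : Indep (MeasurableSpace.comap (P j) inferInstance)
      (MeasurableSpace.comap W inferInstance) μ := by
    set p1 : Set (Set Ω) := {s | ∃ C : Set ℝ, MeasurableSet C ∧ P j ⁻¹' C = s} with hp1def
    set p2 : Set (Set Ω) := {s | ∃ A B : Set (Fin m → ℝ), MeasurableSet A ∧ MeasurableSet B ∧
      s = Sv ⁻¹' A ∩ Pm ⁻¹' B} with hp2def
    refine IndepSets.indep (p1 := p1) (p2 := p2) ((hPmeas j).comap_le) (hWmeas.comap_le) ?_ ?_ ?_ ?_ ?_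
    · -- IsPiSystem p1
      rintro s ⟨C, hC, rfl⟩ t ⟨D, hD, rfl⟩ -
      exact ⟨C ∩ D, hC.inter hD, by rw [Set.preimage_inter]⟩
    · -- IsPiSystem p2
      rintro s ⟨A, B, hA, hB, rfl⟩ t ⟨A', B', hA', hB', rfl⟩ -
      refine ⟨A ∩ A', B ∩ B', hA.inter hA', hB.inter hB', ?_⟩
      rw [Set.preimage_inter, Set.preimage_inter]
      ext ω; simp; tauto
    · -- comap (P j) = generateFrom p1
      rw [MeasurableSpace.comap_eq_generateFrom]
    · -- comap W = generateFrom p2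
      rw [← generateFrom_prod, MeasurableSpace.comap_generateFrom]
      congr 1
      ext s
      constructor
      · rintro ⟨u, ⟨A, hA, B, hB, rfl⟩, rfl⟩
        exact ⟨A, B, hA, hB, (Set.mk_preimage_prod _ _).symm⟩
      · rintro ⟨A, B, hA, hB, rfl⟩
        exact ⟨A ×ˢ B, ⟨A, hA, B, hB, rfl⟩, Set.mk_preimage_prod _ _⟩
    · -- IndepSets p1 p2
      rintro s t ⟨C, hC, rfl⟩ ⟨A, B, hA, hB, rfl⟩
      simp only [Kernel.const_apply, MeasureTheory.ae_dirac_eq, Filter.eventually_pure]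
      set D : Set (Fin m → ℝ) := (fun p => p j) ⁻¹' C ∩ mask ⁻¹' B with hDdef
      have hDmeas : MeasurableSet D :=
        ((measurable_pi_apply j) hC).inter ((measurable_mask j) hB)
      have hPvD : Pv ⁻¹' D = P j ⁻¹' C ∩ Pm ⁻¹' B := by
        rw [hDdef, Set.preimage_inter]
        rfl
      have e1 : P j ⁻¹' C ∩ (Sv ⁻¹' A ∩ Pm ⁻¹' B) = Sv ⁻¹' A ∩ Pv ⁻¹' D := by
        rw [hPvD]; ext ω; simp; tauto
      have e2 : μ (Sv ⁻¹' A ∩ Pv ⁻¹' D) = μ (Sv ⁻¹' A) * μ (Pv ⁻¹' D) :=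
        hSPindep.measure_inter_preimage_eq_mul A D hA hDmeas
      have e3 : μ (Pv ⁻¹' D) = μ (P j ⁻¹' C) * μ (Pm ⁻¹' B) := by
        rw [hPvD]
        exact hPm_indep.measure_inter_preimage_eq_mul C B hC hB
      have hmaskD : mask ⁻¹' B = (fun p : Fin m → ℝ => mask p) ⁻¹' B := rfl
      have e4 : μ (Sv ⁻¹' A ∩ Pm ⁻¹' B) = μ (Sv ⁻¹' A) * μ (Pm ⁻¹' B) := by
        have : Sv ⁻¹' A ∩ Pm ⁻¹' B = Sv ⁻¹' A ∩ Pv ⁻¹' (mask ⁻¹' B) := rfl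
        rw [this, hSPindep.measure_inter_preimage_eq_mul A (mask ⁻¹' B) hA
          ((measurable_mask j) hB)]
        rfl
      rw [e1, e2, e3, e4]
      ring
  exact hgoal

lemma norm_aux (n : ℕ) : ‖((n : ℝ))⁻¹‖ ≤ 1 := by
  rcases Nat.eq_zero_or_pos n with h | h
  · simp [h]
  · rw [Real.norm_eq_abs, abs_of_nonneg (by positivity)]
    rw [inv_le_one_iff₀]
    right
    exact_mod_cast h

lemma integral_g_le {Ω : Type*} [MeasurableSpace Ω] {μ : Measure Ω} [IsProbabilityMeasure μ]
    {m : ℕ} {α : ℝ} (hm : 1 ≤ m) (hα0 : 0 < α)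
    (P S : Fin m → Ω → ℝ)
    (hPmeas : ∀ k, Measurable (P k)) (hSmeas : ∀ k, Measurable (S k))
    (hPindep : iIndepFun P μ)
    (hSPindep : IndepFun (fun ω k => S k ω) (fun ω k => P k ω) μ)
    (j : Fin m)
    (hPnullj : ∀ t ∈ Set.Icc (0:ℝ) 1, μ {ω | P j ω ≤ t} ≤ ENNReal.ofReal t)
    (hSintj : Integrable (S j) μ) (hSposj : ∀ ω, 0 ≤ S j ω)
    (hSnullj : ∫ ω, S j ω ∂μ ≤ 1) :
    ∫ ω, (if P j ω ≤ S j ω *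
        ((bhRho m α (fun k => S k ω) (Function.update (fun k => P k ω) j 0) : ℝ) * α / m)
      then ((bhRho m α (fun k => S k ω) (Function.update (fun k => P k ω) j 0) : ℝ))⁻¹
      else 0) ∂μ ≤ α / m := by
  classical
  have hmpos : (0:ℝ) < m := by exact_mod_cast hm
  have hαm : 0 ≤ α / m := by positivity
  set W : Ω → (Fin m → ℝ) × (Fin m → ℝ) :=
    fun ω => ((fun k => S k ω), Function.update (fun k => P k ω) j 0) with hWdef
  have hWmeas : Measurable W := by
    refine Measurable.prodMk (measurable_pi_lambda _ fun k => hSmeas k) ?_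
    exact (measurable_mask j).comp (measurable_pi_lambda _ fun k => hPmeas k)
  set G : ℝ × ((Fin m → ℝ) × (Fin m → ℝ)) → ℝ := fun x =>
    if x.1 ≤ x.2.1 j * ((bhRho m α x.2.1 x.2.2 : ℝ) * α / m)
    then ((bhRho m α x.2.1 x.2.2 : ℝ))⁻¹ else 0 with hGdef
  have hρmeas : Measurable (fun x : ℝ × ((Fin m → ℝ) × (Fin m → ℝ)) =>
      ((bhRho m α x.2.1 x.2.2 : ℝ))) :=
    (measurable_from_top (f := (Nat.cast : ℕ → ℝ))).comp (measurable_bhRho.comp measurable_snd)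
  have hGmeas : Measurable G := by
    refine Measurable.ite ?_ hρmeas.inv measurable_const
    refine measurableSet_le measurable_fst ?_
    exact ((measurable_snd.fst.eval)).mul ((hρmeas.mul_const α).div_const m)
  have hGbound : ∀ x, ‖G x‖ ≤ 1 := by
    intro x
    rw [hGdef]
    dsimp only
    split
    · exact norm_aux _
    · simp
  have hindep : IndepFun (P j) W μ :=
    indep_aux P S hPmeas hSmeas hPindep hSPindep j
  have hmap : μ.map (fun ω => (P j ω, W ω)) = (μ.map (P j)).prod (μ.map W) :=
    (indepFun_iff_map_prod_eq_prod_map_map (hPmeas j).aemeasurable hWmeas.aemeasurable).mp hindep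
  set ν := μ.map (P j) with hνdef
  set κ := μ.map W with hκdef
  haveI : IsProbabilityMeasure ν := Measure.isProbabilityMeasure_map (hPmeas j).aemeasurable
  haveI : IsProbabilityMeasure κ := Measure.isProbabilityMeasure_map hWmeas.aemeasurable
  have hGint : Integrable G (ν.prod κ) := by
    refine (integrable_const (1:ℝ)).mono' hGmeas.aestronglyMeasurable ?_
    filter_upwards with x using hGbound x
  have hpairmeas : Measurable (fun ω => (P j ω, W ω)) := (hPmeas j).prodMk hWmeas
  have step1 : ∫ ω, (if P j ω ≤ S j ω *
        ((bhRho m α (fun k => S k ω) (Function.update (fun k => P k ω) j 0) : ℝ) * α / m)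
      then ((bhRho m α (fun k => S k ω) (Function.update (fun k => P k ω) j 0) : ℝ))⁻¹
      else 0) ∂μ = ∫ z, G z ∂(ν.prod κ) := by
    rw [← hmap, integral_map hpairmeas.aemeasurable hGmeas.aestronglyMeasurable]
  have step2 : ∫ z, G z ∂(ν.prod κ) = ∫ w, ∫ x, G (x, w) ∂ν ∂κ :=
    integral_prod_symm G hGint
  -- inner bound
  have hinner : ∀ w : (Fin m → ℝ) × (Fin m → ℝ),
      ∫ x, G (x, w) ∂ν ≤ max (w.1 j) 0 * (α / m) := by
    intro w
    set ρ : ℕ := bhRho m α w.1 w.2 with hρdef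
    set c : ℝ := w.1 j * ((ρ : ℝ) * α / m) with hcdef
    have hGrepr : (fun x => G (x, w)) = Set.indicator (Set.Iic c) (fun _ => ((ρ:ℝ))⁻¹) := by
      funext x
      rw [hGdef, Set.indicator_apply]
      simp [Set.mem_Iic, hcdef, hρdef]
    have hint : ∫ x, G (x, w) ∂ν = (ν (Set.Iic c)).toReal • ((ρ:ℝ))⁻¹ := by
      rw [hGrepr]
      exact integral_indicator_const _ measurableSet_Iic
    have hν : ν (Set.Iic c) = μ {ω | P j ω ≤ c} := by
      rw [hνdef, Measure.map_apply (hPmeas j) measurableSet_Iic]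
      rfl
    have hmeasle : (ν (Set.Iic c)).toReal ≤ max c 0 := by
      rcases le_or_gt c 0 with hc | hc
      · have : ν (Set.Iic c) ≤ ENNReal.ofReal 0 := by
          rw [hν]
          refine le_trans (measure_mono ?_) (hPnullj 0 ⟨le_refl _, zero_le_one⟩)
          intro ω hω
          exact le_trans hω hc
        simp only [ENNReal.ofReal_zero, nonpos_iff_eq_zero] at this
        rw [this]
        simp [le_max_right]
      · rcases le_or_gt c 1 with hc1 | hc1
        · have := hPnullj c ⟨hc.le, hc1⟩
          rw [← hν] at this
          exact le_trans (ENNReal.toReal_le_of_le_ofReal hc.le this) (le_max_left _ _)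
        · have h1 : ν (Set.Iic c) ≤ 1 := prob_le_one
          have : (ν (Set.Iic c)).toReal ≤ 1 := by
            rw [← ENNReal.toReal_one]
            exact ENNReal.toReal_mono ENNReal.one_ne_top h1
          exact le_trans this (le_trans hc1.le (le_max_left _ _))
    have hinv0 : (0:ℝ) ≤ ((ρ:ℝ))⁻¹ := by positivity
    have hρρ : (ρ:ℝ) * ((ρ:ℝ))⁻¹ ≤ 1 := by
      rcases Nat.eq_zero_or_pos ρ with h | h
      · simp [h]
      · rw [mul_inv_cancel₀ (by exact_mod_cast h.ne' : ((ρ:ℝ)) ≠ 0)]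
    have ht0 : (0:ℝ) ≤ (ρ:ℝ) * α / m := by positivity
    have hmax : max c 0 = max (w.1 j) 0 * ((ρ:ℝ) * α / m) := by
      rw [max_mul_of_nonneg _ _ ht0, zero_mul, hcdef]
    calc ∫ x, G (x, w) ∂ν = (ν (Set.Iic c)).toReal * ((ρ:ℝ))⁻¹ := by
          rw [hint, smul_eq_mul]
      _ ≤ max c 0 * ((ρ:ℝ))⁻¹ := mul_le_mul_of_nonneg_right hmeasle hinv0
      _ = max (w.1 j) 0 * ((α / m) * ((ρ:ℝ) * ((ρ:ℝ))⁻¹)) := by rw [hmax]; ring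
      _ ≤ max (w.1 j) 0 * ((α / m) * 1) := by
          refine mul_le_mul_of_nonneg_left ?_ (le_max_right _ _)
          exact mul_le_mul_of_nonneg_left hρρ hαm
      _ = max (w.1 j) 0 * (α / m) := by ring
  -- outer bound
  have hbmeas : Measurable (fun w : (Fin m → ℝ) × (Fin m → ℝ) => max (w.1 j) 0 * (α / m)) :=
    ((measurable_fst.eval).max measurable_const).mul_const _
  have hbint : Integrable (fun w : (Fin m → ℝ) × (Fin m → ℝ) => max (w.1 j) 0 * (α / m)) κ := by
    rw [hκdef, integrable_map_measure hbmeas.aestronglyMeasurable hWmeas.aemeasurable]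
    exact (hSintj.pos_part).mul_const _
  have hinner_int : Integrable (fun w => ∫ x, G (x, w) ∂ν) κ := hGint.integral_prod_right
  have step3 : ∫ w, ∫ x, G (x, w) ∂ν ∂κ
      ≤ ∫ w, max (w.1 j) 0 * (α / m) ∂κ :=
    integral_mono hinner_int hbint hinner
  have step4 : ∫ w, max (w.1 j) 0 * (α / m) ∂κ = (∫ ω, max (S j ω) 0 ∂μ) * (α / m) := by
    rw [hκdef, integral_map hWmeas.aemeasurable hbmeas.aestronglyMeasurable]
    exact integral_mul_const _ _
  have step5 : ∫ ω, max (S j ω) 0 ∂μ = ∫ ω, S j ω ∂μ := by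
    refine integral_congr_ae (Filter.Eventually.of_forall fun ω => ?_)
    exact max_eq_left (hSposj ω)
  calc ∫ ω, (if P j ω ≤ S j ω *
        ((bhRho m α (fun k => S k ω) (Function.update (fun k => P k ω) j 0) : ℝ) * α / m)
      then ((bhRho m α (fun k => S k ω) (Function.update (fun k => P k ω) j 0) : ℝ))⁻¹
      else 0) ∂μ
      = ∫ w, ∫ x, G (x, w) ∂ν ∂κ := by rw [step1, step2]
    _ ≤ (∫ ω, S j ω ∂μ) * (α / m) := by rw [← step5, ← step4]; exact step3
    _ ≤ 1 * (α / m) := mul_le_mul_of_nonneg_right hSnullj hαm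
    _ = α / m := one_mul _

end EpBH

open EpBH in
set_option maxHeartbeats 1000000 in
/-- Method 1 (the ep-BH procedure) controls the FDR at level `π₀ α` (known-variance case):
given `m` mutually independent p-values `P j` with the null ones super-uniform, and a vector of
e-values `S` independent of the p-value vector with `E[S j] ≤ 1` for null `j`, the BH procedure
applied to the adjusted p-values `P j / S j` at level `α` has FDR at most `(m₀/m) α`. -/
theorem method1_epBH_fdr_control
    {Ω : Type*} [MeasurableSpace Ω] (μ : Measure Ω) [IsProbabilityMeasure μ]
    (m : ℕ) (hm : 1 ≤ m) (α : ℝ) (hα : α ∈ Set.Ioo (0 : ℝ) 1)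
    (N : Finset (Fin m))
    (P S : Fin m → Ω → ℝ)
    (hPmeas : ∀ j, Measurable (P j)) (hSmeas : ∀ j, Measurable (S j))
    (hPrange : ∀ j ω, P j ω ∈ Set.Icc (0 : ℝ) 1)
    (hSpos : ∀ j ω, 0 ≤ S j ω)
    -- (i) the p-values are mutually independent
    (hPindep : iIndepFun P μ)
    -- (ii) the e-value vector is independent of the p-value vector
    (hSPindep : IndepFun (fun ω j => S j ω) (fun ω j => P j ω) μ)
    -- (iii) the null p-values are super-uniform
    (hPnull : ∀ j ∈ N, ∀ t ∈ Set.Icc (0 : ℝ) 1,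
      μ {ω | P j ω ≤ t} ≤ ENNReal.ofReal t)
    -- (iv) the null e-values have expectation at most one
    (hSint : ∀ j, Integrable (S j) μ)
    (hSnull : ∀ j ∈ N, ∫ ω, S j ω ∂μ ≤ 1)
    (R V : Ω → ℕ)
    (hR : ∀ ω, R ω = sSup {r : ℕ | r ≤ m ∧
      r ≤ (univ.filter (fun j : Fin m =>
        P j ω ≤ S j ω * ((r : ℝ) * α / m))).card})
    (hV : ∀ ω, V ω = (N.filter (fun j : Fin m =>
      P j ω ≤ S j ω * ((R ω : ℝ) * α / m))).card) :
    ∫ ω, (V ω : ℝ) / (max (R ω) 1 : ℕ) ∂μ ≤ ((N.card : ℝ) / m) * α := by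
  classical
  obtain ⟨hα0, hα1⟩ := hα
  have hmpos : (0:ℝ) < m := by exact_mod_cast hm
  have hReq : ∀ ω, R ω = bhRho m α (fun k => S k ω) (fun k => P k ω) := by
    intro ω
    rw [hR ω]
    rfl
  set Rj : Fin m → Ω → ℕ := fun j ω =>
    bhRho m α (fun k => S k ω) (Function.update (fun k => P k ω) j 0) with hRjdef
  set g : Fin m → Ω → ℝ := fun j ω =>
    if P j ω ≤ S j ω * ((Rj j ω : ℝ) * α / m) then ((Rj j ω : ℝ))⁻¹ else 0 with hgdef
  -- pointwise identity
  have hpoint : ∀ ω, (V ω : ℝ) / ((max (R ω) 1 : ℕ) : ℝ) = ∑ j ∈ N, g j ω := by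
    intro ω
    have hkey : ∀ j : Fin m,
        1 ≤ Rj j ω ∧
        ((P j ω ≤ S j ω * ((bhRho m α (fun k => S k ω) (fun k => P k ω) : ℝ) * α / m)) ↔
          (P j ω ≤ S j ω * ((Rj j ω : ℝ) * α / m))) ∧
        ((P j ω ≤ S j ω * ((Rj j ω : ℝ) * α / m)) →
          bhRho m α (fun k => S k ω) (fun k => P k ω) = Rj j ω) := by
      intro j
      exact bhRho_key hm hα0.le (hSpos j ω) (fun k => (hPrange k ω).1)
    have hcastV : (V ω : ℝ) = ∑ j ∈ N,
        (if P j ω ≤ S j ω * ((R ω : ℝ) * α / m) then (1:ℝ) else 0) := by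
      rw [hV ω, Finset.card_filter, Nat.cast_sum]
      simp [apply_ite (Nat.cast : ℕ → ℝ)]
    rw [hcastV, Finset.sum_div]
    refine Finset.sum_congr rfl fun j _ => ?_
    obtain ⟨h1, hiff, heqf⟩ := hkey j
    rw [hReq ω]
    by_cases hc : P j ω ≤ S j ω * ((bhRho m α (fun k => S k ω) (fun k => P k ω) : ℝ) * α / m)
    · have hc' := hiff.mp hc
      have heq2 := heqf hc'
      rw [if_pos hc, hgdef]
      simp only
      rw [if_pos hc', ← heq2]
      have hmax : max (bhRho m α (fun k => S k ω) (fun k => P k ω)) 1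
          = bhRho m α (fun k => S k ω) (fun k => P k ω) := by
        rw [max_eq_left]
        rw [heq2]
        exact h1
      rw [hmax, one_div]
    · have hc' : ¬ P j ω ≤ S j ω * ((Rj j ω : ℝ) * α / m) := fun h => hc (hiff.mpr h)
      rw [if_neg hc, hgdef]
      simp only
      rw [if_neg hc', zero_div]
  -- measurability and integrability of g
  have hWmeas : ∀ j : Fin m, Measurable (fun ω =>
      (((fun k => S k ω), Function.update (fun k => P k ω) j 0) :
        (Fin m → ℝ) × (Fin m → ℝ))) := by
    intro j
    refine Measurable.prodMk (measurable_pi_lambda _ fun k => hSmeas k) ?_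
    exact (measurable_mask j).comp (measurable_pi_lambda _ fun k => hPmeas k)
  have hRjmeas : ∀ j, Measurable (Rj j) := by
    intro j
    rw [hRjdef]
    exact measurable_bhRho2 (measurable_pi_lambda _ fun k => hSmeas k)
      ((measurable_mask j).comp (measurable_pi_lambda _ fun k => hPmeas k))
  have hgmeas : ∀ j, Measurable (g j) := by
    intro j
    rw [hgdef]
    refine Measurable.ite ?_ ?_ measurable_const
    · refine measurableSet_le (hPmeas j) ?_
      exact (hSmeas j).mul ((((measurable_from_top (f := (Nat.cast : ℕ → ℝ))).comp
        (hRjmeas j)).mul_const α).div_const m)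
    · exact ((measurable_from_top (f := (Nat.cast : ℕ → ℝ))).comp (hRjmeas j)).inv
  have hgint : ∀ j, Integrable (g j) μ := by
    intro j
    refine (integrable_const (1:ℝ)).mono' (hgmeas j).aestronglyMeasurable ?_
    filter_upwards with ω
    rw [hgdef]
    simp only
    split
    · exact norm_aux _
    · simp
  -- put everything together
  have hsplit : ∫ ω, (V ω : ℝ) / ((max (R ω) 1 : ℕ) : ℝ) ∂μ = ∑ j ∈ N, ∫ ω, g j ω ∂μ := by
    rw [← integral_finset_sum N fun j _ => hgint j]
    exact integral_congr_ae (Filter.Eventually.of_forall hpoint)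
  rw [hsplit]
  have hbound : ∀ j ∈ N, ∫ ω, g j ω ∂μ ≤ α / m := by
    intro j hj
    have := integral_g_le hm hα0 P S hPmeas hSmeas hPindep hSPindep j
      (hPnull j hj) (hSint j) (fun ω => hSpos j ω) (hSnull j hj)
    rw [hgdef]
    exact this
  calc ∑ j ∈ N, ∫ ω, g j ω ∂μ ≤ ∑ _j ∈ N, α / m := Finset.sum_le_sum hbound
    _ = (N.card : ℝ) * (α / m) := by rw [Finset.sum_const, nsmul_eq_mul]
    _ = ((N.card : ℝ) / m) * α := by ring
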